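/- Let t ≥ 1 and n be integers, let k₊ ≥ k₋ ≥ 0 be integers, and let α be a real number with 0 < α, α ≤ t/n, and t/n ≤ 1/2. If (k₋+1)² / (k₊+k₋+1) ≥ e/α (where e is Euler's number), then there is no lattice Λ ⊆ ℤⁿ (additive subgroup of ℤⁿ) such that the error-ball B(n,t,k₊,k₋) tiles ℤⁿ by Λ. -/

import Mathlib

open Finset

/-- Hamming weight of an integer vector: the number of nonzero entries. -/
def wt {n : ℕ} (x : Fin n → ℤ) : ℕ := (Finset.univ.filter (fun i => x i ≠ 0)).card

/-- The `(n,t,k₊,k₋)`-error-ball in `ℤⁿ`. -/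
def errBall (n t : ℕ) (kp km : ℤ) : Set (Fin n → ℤ) :=
  {x | (∀ i, -km ≤ x i ∧ x i ≤ kp) ∧ wt x ≤ t}

/-- `Tiles B T` : every `z ∈ ℤⁿ` is uniquely `z = v + b` with `v ∈ T` and `b ∈ B`. -/
def Tiles {n : ℕ} (B T : Set (Fin n → ℤ)) : Prop :=
  ∀ z : Fin n → ℤ, ∃! p : (Fin n → ℤ) × (Fin n → ℤ),
    p.1 ∈ T ∧ p.2 ∈ B ∧ z = p.1 + p.2

lemma aux_card_filter_lt (n m : ℕ) (h : m ≤ n) :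
    (univ.filter fun i : Fin n => (i : ℕ) < m).card = m := by
  classical
  have := Finset.card_bij' (s := univ.filter fun i : Fin n => (i : ℕ) < m)
    (t := (univ : Finset (Fin m)))
    (i := fun i hi => ⟨(i : ℕ), (Finset.mem_filter.mp hi).2⟩)
    (j := fun j _ => Fin.castLE h j)
    (by intro a ha; simp)
    (by intro a ha; simp)
    (by intro a ha; ext; simp [Fin.castLE])
    (by intro a ha; ext; simp [Fin.castLE])
  simpa using this

lemma aux_card_filter_le (n : ℕ) (p : Fin n → Prop) [DecidablePred p] (a b : ℕ)
    (hp : ∀ i, p i → a ≤ (i : ℕ) ∧ (i : ℕ) < b) :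
    (univ.filter fun i => p i).card ≤ b - a := by
  classical
  have := Finset.card_le_card_of_injOn (s := univ.filter fun i => p i)
    (t := Finset.Ico a b) (fun i => (i : ℕ))
    (by intro i hi
        simp only [Finset.mem_coe, Finset.mem_filter] at hi
        simpa [Finset.mem_Ico] using hp i hi.2)
    (fun x _ y _ hxy => Fin.val_injective hxy)
  simpa [Nat.card_Ico] using this

lemma aux_sum_choose (n t : ℕ) (ht : 1 ≤ t) (hn : 2 * t ≤ n) :
    (∑ i ∈ Finset.range (t + 1), (n.choose i : ℝ)) ≤ (Real.exp 1 * n / t) ^ t := by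
  have ht0 : (0 : ℝ) < t := by exact_mod_cast ht
  have hn0 : (0 : ℝ) < n := by
    have : 1 ≤ n := le_trans (by omega) hn
    exact_mod_cast this
  have htn : (t : ℝ) ≤ n := by exact_mod_cast le_trans (by omega) hn
  set x : ℝ := (t : ℝ) / n with hx
  have hx0 : 0 < x := div_pos ht0 hn0
  have hnt1 : (1 : ℝ) ≤ (n : ℝ) / t := (one_le_div ht0).mpr htn
  have key : ∀ i ∈ Finset.range (t + 1),
      (n.choose i : ℝ) ≤ ((n : ℝ) / t) ^ t * ((n.choose i : ℝ) * x ^ i) := by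
    intro i hi
    have hit : i ≤ t := by simpa using Nat.lt_succ_iff.mp (Finset.mem_range.mp hi)
    have hinv : x = ((n : ℝ) / t)⁻¹ := by
      rw [hx, inv_div]
    have h1 : ((n : ℝ) / t) ^ t * x ^ i = ((n : ℝ) / t) ^ (t - i) := by
      rw [hinv, inv_pow, ← div_eq_mul_inv]
      exact (pow_sub₀ _ (by positivity) hit).symm
    have h2 : (1 : ℝ) ≤ ((n : ℝ) / t) ^ (t - i) := one_le_pow₀ hnt1
    calc (n.choose i : ℝ) = (n.choose i : ℝ) * 1 := by ring
      _ ≤ (n.choose i : ℝ) * (((n : ℝ) / t) ^ t * x ^ i) := by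
          rw [h1]; exact mul_le_mul_of_nonneg_left h2 (by positivity)
      _ = ((n : ℝ) / t) ^ t * ((n.choose i : ℝ) * x ^ i) := by ring
  have hsum1 : (∑ i ∈ Finset.range (t + 1), (n.choose i : ℝ))
      ≤ ((n : ℝ) / t) ^ t * ∑ i ∈ Finset.range (t + 1), (n.choose i : ℝ) * x ^ i := by
    rw [Finset.mul_sum]
    exact Finset.sum_le_sum key
  have hsub : Finset.range (t + 1) ⊆ Finset.range (n + 1) := by
    apply Finset.range_subset_range.mpr; omega
  have hsum2 : (∑ i ∈ Finset.range (t + 1), (n.choose i : ℝ) * x ^ i)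
      ≤ ∑ i ∈ Finset.range (n + 1), (n.choose i : ℝ) * x ^ i :=
    Finset.sum_le_sum_of_subset_of_nonneg hsub (fun i _ _ => by positivity)
  have hbin : (∑ i ∈ Finset.range (n + 1), (n.choose i : ℝ) * x ^ i) = (x + 1) ^ n := by
    rw [add_pow]
    refine Finset.sum_congr rfl fun i _ => by ring
  have hexp : (x + 1) ^ n ≤ Real.exp 1 ^ t := by
    have h1 : x + 1 ≤ Real.exp x := Real.add_one_le_exp x
    have h2 : (x + 1) ^ n ≤ Real.exp x ^ n := by
      apply pow_le_pow_left₀ (by positivity) h1 n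
    have h3 : Real.exp x ^ n = Real.exp (x * n) := by
      rw [← Real.exp_nat_mul]; ring_nf
    have h4 : x * n = t := div_mul_cancel₀ _ (ne_of_gt hn0)
    rw [h3, h4] at h2
    calc (x + 1) ^ n ≤ Real.exp t := h2
      _ = Real.exp 1 ^ t := by rw [← Real.exp_nat_mul]; ring_nf
  calc (∑ i ∈ Finset.range (t + 1), (n.choose i : ℝ))
      ≤ ((n : ℝ) / t) ^ t * ∑ i ∈ Finset.range (t + 1), (n.choose i : ℝ) * x ^ i := hsum1
    _ ≤ ((n : ℝ) / t) ^ t * ((x + 1) ^ n) := by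
        apply mul_le_mul_of_nonneg_left _ (by positivity)
        rw [← hbin]; exact hsum2
    _ ≤ ((n : ℝ) / t) ^ t * Real.exp 1 ^ t := mul_le_mul_of_nonneg_left hexp (by positivity)
    _ = (Real.exp 1 * n / t) ^ t := by rw [← mul_pow]; ring_nf

lemma aux_ball_card (n t : ℕ) (kp km : ℤ) (hkm : 1 ≤ km) (hkp : km ≤ kp) :
    ((Fintype.piFinset fun _ : Fin n => Finset.Icc (-km) kp).filter fun x => wt x ≤ t).card
      ≤ (∑ i ∈ Finset.range (t + 1), n.choose i) * (kp + km).toNat ^ t := by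
  classical
  set c : ℕ := (kp + km).toNat with hc
  have hc2 : 1 ≤ c := by
    have h2 : (1 : ℤ) ≤ kp + km := by omega
    omega
  set P : Finset (Finset (Fin n)) := (univ : Finset (Fin n)).powerset.filter fun S => S.card ≤ t
    with hP
  set piF : Finset (Fin n) → Finset (Fin n → ℤ) := fun S =>
    Fintype.piFinset fun i => if i ∈ S then (Finset.Icc (-km) kp).erase 0 else {0} with hpiF
  have hsub : ((Fintype.piFinset fun _ : Fin n => Finset.Icc (-km) kp).filter fun x => wt x ≤ t)
      ⊆ P.biUnion piF := by
    intro x hx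
    rw [Finset.mem_filter, Fintype.mem_piFinset] at hx
    refine Finset.mem_biUnion.mpr ⟨univ.filter fun i => x i ≠ 0, ?_, ?_⟩
    · rw [hP, Finset.mem_filter]
      exact ⟨Finset.mem_powerset.mpr (Finset.subset_univ _), hx.2⟩
    · rw [hpiF, Fintype.mem_piFinset]
      intro i
      by_cases h : x i ≠ 0
      · simpa [h] using Finset.mem_erase.mpr ⟨h, hx.1 i⟩
      · simp only [Finset.mem_filter, Finset.mem_univ, true_and, h, if_false]
        push_neg at h
        simp [h]
  have hpiece : ∀ S ∈ P, (piF S).card ≤ c ^ t := by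
    intro S hS
    rw [hpiF]
    rw [Fintype.card_piFinset]
    have hcard : ∀ i : Fin n, ((if i ∈ S then (Finset.Icc (-km) kp).erase 0 else {0}) :
        Finset ℤ).card = if i ∈ S then c else 1 := by
      intro i
      by_cases h : i ∈ S
      · simp only [h, if_true]
        rw [Finset.card_erase_of_mem (by simp; omega), Int.card_Icc]
        omega
      · simp [h]
    calc (∏ i : Fin n, ((if i ∈ S then (Finset.Icc (-km) kp).erase 0 else {0}) :
          Finset ℤ).card) = ∏ i : Fin n, (if i ∈ S then c else 1) := by
            exact Finset.prod_congr rfl fun i _ => hcard i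
      _ = c ^ S.card := by
          rw [Finset.prod_ite_mem, Finset.univ_inter, Finset.prod_const]
      _ ≤ c ^ t := Nat.pow_le_pow_right hc2 ((Finset.mem_filter.mp hS).2)
  have hPcard : P.card ≤ ∑ i ∈ Finset.range (t + 1), n.choose i := by
    have hsub2 : P ⊆ (Finset.range (t + 1)).biUnion fun i =>
        Finset.powersetCard i (univ : Finset (Fin n)) := by
      intro S hS
      rw [hP, Finset.mem_filter] at hS
      exact Finset.mem_biUnion.mpr ⟨S.card, Finset.mem_range.mpr (Nat.lt_succ_of_le hS.2),
        Finset.mem_powersetCard.mpr ⟨Finset.subset_univ _, rfl⟩⟩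
    calc P.card ≤ _ := Finset.card_le_card hsub2
      _ ≤ ∑ i ∈ Finset.range (t + 1), (Finset.powersetCard i (univ : Finset (Fin n))).card :=
          Finset.card_biUnion_le
      _ = ∑ i ∈ Finset.range (t + 1), n.choose i := by
          refine Finset.sum_congr rfl fun i _ => ?_
          rw [Finset.card_powersetCard, Finset.card_univ, Fintype.card_fin]
  calc ((Fintype.piFinset fun _ : Fin n => Finset.Icc (-km) kp).filter fun x => wt x ≤ t).card
      ≤ (P.biUnion piF).card := Finset.card_le_card hsub
    _ ≤ ∑ S ∈ P, (piF S).card := Finset.card_biUnion_le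
    _ ≤ ∑ S ∈ P, c ^ t := Finset.sum_le_sum hpiece
    _ = P.card * c ^ t := by rw [Finset.sum_const, smul_eq_mul]
    _ ≤ (∑ i ∈ Finset.range (t + 1), n.choose i) * c ^ t :=
        Nat.mul_le_mul_right _ hPcard

theorem stmt_9 (n t : ℕ) (kp km : ℤ) (ht : 1 ≤ t)
    (hkm : 0 ≤ km) (hkp : km ≤ kp)
    (α : ℝ) (hα0 : 0 < α) (hα1 : α ≤ (t : ℝ) / (n : ℝ))
    (hhalf : (t : ℝ) / (n : ℝ) ≤ 1 / 2)
    (hbig : Real.exp 1 / α ≤ ((km : ℝ) + 1) ^ 2 / ((kp : ℝ) + (km : ℝ) + 1)) :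
    ¬ ∃ Λ : AddSubgroup (Fin n → ℤ),
      Tiles (errBall n t kp km) (Λ : Set (Fin n → ℤ)) := by
  classical
  -- basic derived facts
  have hn0 : 0 < n := by
    rcases Nat.eq_zero_or_pos n with h | h
    · subst h; simp at hα1; linarith
    · exact h
  have hnR : (0:ℝ) < n := by exact_mod_cast hn0
  have htR : (0:ℝ) < t := by exact_mod_cast ht
  have h2t : 2 * t ≤ n := by
    have h := (div_le_iff₀ hnR).mp hhalf
    have : (2 * t : ℝ) ≤ n := by linarith
    exact_mod_cast this
  have hαhalf : α ≤ 1 / 2 := le_trans hα1 hhalf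
  have hkmR : (0:ℝ) ≤ km := by exact_mod_cast hkm
  have hkpR : (km:ℝ) ≤ kp := by exact_mod_cast hkp
  have hkkpos : (0:ℝ) < (kp:ℝ) + km + 1 := by linarith
  have he : (2:ℝ) < Real.exp 1 := by
    have := Real.exp_one_gt_d9; norm_num at this ⊢; linarith
  have hkey : Real.exp 1 * ((kp:ℝ) + km + 1) ≤ ((km:ℝ) + 1) ^ 2 * α := by
    have := (div_le_div_iff₀ hα0 hkkpos).mp hbig
    linarith
  have hkm1 : 1 ≤ km := by
    by_contra h
    have h0 : km = 0 := by omega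
    subst h0
    norm_num at hkey
    nlinarith
  have hkmR1 : (1:ℝ) ≤ km := by exact_mod_cast hkm1
  -- the key counting inequality
  have hcount : (∑ i ∈ Finset.range (t + 1), n.choose i) * (kp + km).toNat ^ t
      < (km + 1).toNat ^ (2 * t) := by
    have hNle : (∑ i ∈ Finset.range (t + 1), (n.choose i : ℝ)) ≤ (Real.exp 1 / α) ^ t := by
      have h1 : (∑ i ∈ Finset.range (t + 1), (n.choose i : ℝ)) ≤ (Real.exp 1 * n / t) ^ t :=
        aux_sum_choose n t ht h2t
      refine le_trans h1 (pow_le_pow_left₀ (by positivity) ?_ t)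
      rw [div_le_div_iff₀ htR hα0]
      have hα1' : α * n ≤ t := (le_div_iff₀ hnR).mp hα1
      nlinarith [Real.exp_pos 1]
    have hcR : ((kp + km).toNat : ℝ) = (kp:ℝ) + km := by
      have h : ((kp + km).toNat : ℤ) = kp + km := Int.toNat_of_nonneg (by omega)
      exact_mod_cast congrArg (Int.cast : ℤ → ℝ) h
    have hAR : (((km + 1).toNat : ℝ)) = (km:ℝ) + 1 := by
      have h : ((km + 1).toNat : ℤ) = km + 1 := Int.toNat_of_nonneg (by omega)
      exact_mod_cast congrArg (Int.cast : ℤ → ℝ) h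
    have hchain : ((∑ i ∈ Finset.range (t + 1), n.choose i : ℕ) : ℝ) * ((kp + km).toNat : ℝ) ^ t
        < ((km + 1).toNat : ℝ) ^ (2 * t) := by
      push_cast
      rw [hcR, hAR]
      have hepos : (0:ℝ) < Real.exp 1 / α := by positivity
      calc (∑ i ∈ Finset.range (t + 1), (n.choose i : ℝ)) * ((kp:ℝ) + km) ^ t
          ≤ (Real.exp 1 / α) ^ t * ((kp:ℝ) + km) ^ t := by
            apply mul_le_mul_of_nonneg_right hNle (pow_nonneg (by linarith) t)
        _ < (Real.exp 1 / α) ^ t * ((kp:ℝ) + km + 1) ^ t := by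
            apply mul_lt_mul_of_pos_left _ (by positivity)
            exact pow_lt_pow_left₀ (by linarith) (by linarith) (by omega)
        _ = (Real.exp 1 / α * ((kp:ℝ) + km + 1)) ^ t := by rw [mul_pow]
        _ ≤ (((km:ℝ) + 1) ^ 2) ^ t := by
            apply pow_le_pow_left₀ (mul_nonneg hepos.le (by linarith))
            rw [div_mul_eq_mul_div, div_le_iff₀ hα0]
            linarith
        _ = ((km:ℝ) + 1) ^ (2 * t) := by rw [← pow_mul]
    exact_mod_cast hchain
  -- tiling argument
  rintro ⟨Λ, hT⟩
  set A : Finset (Fin n → ℤ) :=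
    Fintype.piFinset fun i : Fin n => if (i : ℕ) < 2 * t then Finset.Icc 0 km else {0} with hA
  set Bfin : Finset (Fin n → ℤ) :=
    (Fintype.piFinset fun _ : Fin n => Finset.Icc (-km) kp).filter (fun x => wt x ≤ t) with hB
  have hAcard : A.card = (km + 1).toNat ^ (2 * t) := by
    rw [hA, Fintype.card_piFinset]
    have : ∀ i : Fin n, ((if (i : ℕ) < 2 * t then Finset.Icc (0:ℤ) km else {0}) :
        Finset ℤ).card = if (i : ℕ) < 2 * t then (km + 1).toNat else 1 := by
      intro i
      by_cases h : (i : ℕ) < 2 * t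
      · simp only [h, if_true, Int.card_Icc]; omega
      · simp [h]
    rw [Finset.prod_congr rfl fun i _ => this i, Finset.prod_ite, Finset.prod_const,
      Finset.prod_const, one_pow, mul_one, aux_card_filter_lt n (2 * t) h2t]
  have hBcard : Bfin.card < A.card := by
    rw [hAcard]
    exact lt_of_le_of_lt (aux_ball_card n t kp km hkm1 hkp) hcount
  -- the map a ↦ ball-part of its decomposition
  set f : (Fin n → ℤ) → (Fin n → ℤ) := fun a => (Classical.choose (hT a).exists).2 with hf
  have hfspec : ∀ a : Fin n → ℤ, (Classical.choose (hT a).exists).1 ∈ (Λ : Set (Fin n → ℤ)) ∧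
      (Classical.choose (hT a).exists).2 ∈ errBall n t kp km ∧
      a = (Classical.choose (hT a).exists).1 + (Classical.choose (hT a).exists).2 :=
    fun a => Classical.choose_spec (hT a).exists
  have hmaps : ∀ a ∈ A, f a ∈ Bfin := by
    intro a _
    obtain ⟨-, hb, -⟩ := hfspec a
    obtain ⟨hbd, hwt⟩ := hb
    rw [hB, Finset.mem_filter, Fintype.mem_piFinset]
    exact ⟨fun i => Finset.mem_Icc.mpr (hbd i), hwt⟩
  obtain ⟨a, ha, a', ha', hne, hfe⟩ :=
    Finset.exists_ne_map_eq_of_card_lt_of_maps_to hBcard hmaps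
  -- difference lies in the lattice, is nonzero, small entries, supported on first 2t coords
  set d : Fin n → ℤ := a - a' with hd
  have hdΛ : d ∈ (Λ : Set (Fin n → ℤ)) := by
    obtain ⟨hv1, -, he1⟩ := hfspec a
    obtain ⟨hv2, -, he2⟩ := hfspec a'
    have h3 : (Classical.choose (hT a).exists).2 = (Classical.choose (hT a').exists).2 := hfe
    have hdd : d = (Classical.choose (hT a).exists).1 - (Classical.choose (hT a').exists).1 := by
      have h4 : a - a' = ((Classical.choose (hT a).exists).1 + (Classical.choose (hT a).exists).2)
          - ((Classical.choose (hT a').exists).1 + (Classical.choose (hT a').exists).2) := by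
        rw [← he1, ← he2]
      rw [hd, h4, h3]; abel
    rw [hdd]
    exact sub_mem hv1 hv2
  have hdne : d ≠ 0 := sub_ne_zero.mpr hne
  have haA : ∀ i : Fin n, a i ∈ (if (i : ℕ) < 2 * t then Finset.Icc (0:ℤ) km else {0}) :=
    Fintype.mem_piFinset.mp (by rwa [hA] at ha)
  have haA' : ∀ i : Fin n, a' i ∈ (if (i : ℕ) < 2 * t then Finset.Icc (0:ℤ) km else {0}) :=
    Fintype.mem_piFinset.mp (by rwa [hA] at ha')
  have hdbd : ∀ i : Fin n, -km ≤ d i ∧ d i ≤ km := by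
    intro i
    have h1 := haA i; have h2 := haA' i
    by_cases h : (i : ℕ) < 2 * t
    · rw [if_pos h, Finset.mem_Icc] at h1 h2
      constructor <;> [simp only [hd, Pi.sub_apply]; simp only [hd, Pi.sub_apply]] <;> omega
    · rw [if_neg h, Finset.mem_singleton] at h1 h2
      simp [hd, h1, h2, hkm]
  have hdsupp : ∀ i : Fin n, ¬ ((i : ℕ) < 2 * t) → d i = 0 := by
    intro i h
    have h1 := haA i; have h2 := haA' i
    rw [if_neg h, Finset.mem_singleton] at h1 h2
    simp [hd, h1, h2]
  -- split d into two ball elements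
  set b1 : Fin n → ℤ := fun i => if (i : ℕ) < t then d i else 0 with hb1
  set b2 : Fin n → ℤ := fun i => if (i : ℕ) < t then 0 else -d i with hb2
  have hsplit : b1 = d + b2 := by
    funext i
    by_cases h : (i : ℕ) < t <;> simp [hb1, hb2, h]
  have hb1B : b1 ∈ errBall n t kp km := by
    constructor
    · intro i
      by_cases h : (i : ℕ) < t
      · have := hdbd i
        simp only [hb1, h, if_true]
        exact ⟨this.1, le_trans this.2 hkp⟩
      · simp only [hb1, h, if_false]
        constructor <;> omega
    · have h := aux_card_filter_le n (fun i => b1 i ≠ 0) 0 t (by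
        intro i hi
        refine ⟨Nat.zero_le _, ?_⟩
        by_contra h
        exact hi (by simp [hb1, h]))
      unfold wt
      simpa using h
  have hb2B : b2 ∈ errBall n t kp km := by
    constructor
    · intro i
      by_cases h : (i : ℕ) < t
      · simp only [hb2, h, if_true]
        constructor <;> omega
      · have := hdbd i
        simp only [hb2, h, if_false]
        constructor <;> omega
    · have h := aux_card_filter_le n (fun i => b2 i ≠ 0) t (2 * t) (by
        intro i hi
        by_cases hlt : (i : ℕ) < t
        · exact absurd (by simp [hb2, hlt]) hi
        · refine ⟨by omega, ?_⟩
          by_contra h2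
          exact hi (by simp [hb2, hlt, hdsupp i (by omega)]))
      unfold wt
      exact le_trans h (by omega)
  -- two decompositions of b1
  have hu := (hT b1).unique
    (y₁ := (d, b2)) (y₂ := ((0 : Fin n → ℤ), b1))
    ⟨hdΛ, hb2B, hsplit⟩
    ⟨zero_mem Λ, hb1B, (zero_add b1).symm⟩
  have : d = 0 := congrArg Prod.fst hu
  exact hdne this
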